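/- arXiv:1310.8533 — 2 statements merged into one kernel-verified Lean document; each statement's English description precedes it below -/
import Mathlib

section
/- Let n and d be integers with n ≥ d + 2 and d ≥ 2, and let T_d = T(⌈(n−d)/2⌉, ⌊(n−d)/2⌋, d) be the tree of order n. Then the domination number of T_d equals ⌈(d+2)/3⌉. -/
/-- The algebraic connectivity of a graph: the second smallest Laplacian eigenvalue,
realized as the minimum of the Rayleigh quotient over unit vectors orthogonal to the
all-ones vector. -/
noncomputable def algConn {V : Type*} [Fintype V] [DecidableEq V] (G : SimpleGraph V) : ℝ :=
  letI := Classical.decRel G.Adj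
  sInf { r : ℝ | ∃ x : V → ℝ, (∑ v, x v) = 0 ∧ (∑ v, (x v) ^ 2) = 1 ∧
      r = dotProduct x ((G.lapMatrix ℝ).mulVec x) }

/-- A Fiedler vector: an eigenvector of the Laplacian matrix for the eigenvalue `algConn G`. -/
noncomputable def IsFiedlerVector {V : Type*} [Fintype V] [DecidableEq V]
    (G : SimpleGraph V) (x : V → ℝ) : Prop :=
  letI := Classical.decRel G.Adj
  x ≠ 0 ∧ (G.lapMatrix ℝ).mulVec x = algConn G • x

/-- The domination number: the minimum size of a set `S` of vertices such that every
vertex outside `S` has a neighbor in `S`. -/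
noncomputable def dominationNumber {V : Type*} [Fintype V] (G : SimpleGraph V) : ℕ :=
  sInf { k : ℕ | ∃ S : Finset V, S.card = k ∧ ∀ v ∉ S, ∃ u ∈ S, G.Adj u v }

/-- The tree `T(k,l,d)`: a path on `d` vertices `0, …, d-1` with `k` pendant vertices
attached at vertex `0` and `l` pendant vertices attached at vertex `d-1`. -/
def Tkld (k l d : ℕ) : SimpleGraph (Fin k ⊕ Fin d ⊕ Fin l) where
  Adj a b :=
    match a, b with
    | Sum.inl _, Sum.inr (Sum.inl j) => j.1 = 0
    | Sum.inr (Sum.inl j), Sum.inl _ => j.1 = 0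
    | Sum.inr (Sum.inl i), Sum.inr (Sum.inl j) => i.1 + 1 = j.1 ∨ j.1 + 1 = i.1
    | Sum.inr (Sum.inl j), Sum.inr (Sum.inr _) => j.1 + 1 = d
    | Sum.inr (Sum.inr _), Sum.inr (Sum.inl j) => j.1 + 1 = d
    | _, _ => False
  symm := by
    constructor; rintro (a | b | c) (a' | b' | c') h <;> simp_all <;> tauto
  loopless := by
    constructor; rintro (a | b | c) h <;> simp_all

/-- The coalescence `G₁(v) ◇ G₂(u)`: identify the vertex `v` of `G₁` with the vertex `u`
of `G₂` (the identified vertex is represented by `Sum.inl v`). -/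
def coalesce {V₁ V₂ : Type*} (G₁ : SimpleGraph V₁) (G₂ : SimpleGraph V₂)
    (v : V₁) (u : V₂) : SimpleGraph (V₁ ⊕ {w : V₂ // w ≠ u}) where
  Adj a b :=
    match a, b with
    | Sum.inl a, Sum.inl b => G₁.Adj a b
    | Sum.inl a, Sum.inr b => a = v ∧ G₂.Adj u b.1
    | Sum.inr a, Sum.inl b => b = v ∧ G₂.Adj u a.1
    | Sum.inr a, Sum.inr b => G₂.Adj a.1 b.1
  symm := by
    constructor; rintro (a | a) (b | b) h <;> simp_all [SimpleGraph.adj_comm]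
  loopless := by
    constructor; rintro (a | a) h <;> simp_all

lemma dom_upper (k l d : ℕ) (hd : 2 ≤ d) :
    ∃ S : Finset (Fin k ⊕ Fin d ⊕ Fin l), S.card = (d+4)/3 ∧
      ∀ v ∉ S, ∃ u ∈ S, (Tkld k l d).Adj u v := by
  classical
  have hd0 : 0 < d := by omega
  set m := (d+1)/3 with hm
  have hm1 : 1 ≤ m := by omega
  have pvlt : ∀ j : ℕ, j % d < d := fun j => Nat.mod_lt _ hd0
  set pv : ℕ → (Fin k ⊕ Fin d ⊕ Fin l) := fun j => Sum.inr (Sum.inl ⟨j % d, pvlt j⟩) with hpv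
  have pveq : ∀ j j', j < d → j' < d → pv j = pv j' → j = j' := by
    intro j j' h h' he
    simpa [hpv, Fin.ext_iff, Nat.mod_eq_of_lt h, Nat.mod_eq_of_lt h'] using he
  have h3i : ∀ i, i < m → 3*i ≤ d-2 := by intro i hi; omega
  refine ⟨insert (pv (d-1)) ((Finset.range m).image (fun i => pv (3*i))), ?_, ?_⟩
  · rw [Finset.card_insert_of_notMem, Finset.card_image_of_injOn, Finset.card_range]
    · omega
    · intro a ha b hb he
      simp only [Finset.coe_range, Set.mem_Iio] at ha hb
      have := pveq _ _ (by have := h3i a ha; omega) (by have := h3i b hb; omega) he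
      omega
    · simp only [Finset.mem_image, Finset.mem_range, not_exists]
      rintro i ⟨hi, he⟩
      have := pveq _ _ (by have := h3i i hi; omega) (by omega) he
      have := h3i i hi; omega
  · rintro (a | j | b) hv
    · refine ⟨pv 0, ?_, ?_⟩
      · apply Finset.mem_insert_of_mem
        exact Finset.mem_image.2 ⟨0, Finset.mem_range.2 hm1, by norm_num⟩
      · show (0 : ℕ) % d = 0
        simp
    · -- path vertex
      have hJ : j.1 < d := j.isLt
      have hmem : ∀ j' : ℕ, j' < d → (j' = d - 1 ∨ (j' % 3 = 0 ∧ j' ≤ d - 2)) →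
          pv j' ∈ insert (pv (d-1)) ((Finset.range m).image (fun i => pv (3*i))) := by
        intro j' hj' hc
        rcases hc with rfl | ⟨h1, h2⟩
        · exact Finset.mem_insert_self _ _
        · apply Finset.mem_insert_of_mem
          exact Finset.mem_image.2 ⟨j'/3, Finset.mem_range.2 (by omega), by
            congr 1; omega⟩
      have hpvj : pv j.1 = Sum.inr (Sum.inl j) := by
        simp [hpv, Fin.ext_iff, Nat.mod_eq_of_lt hJ]
      have h3 : j.1 % 3 = 0 ∨ j.1 % 3 = 1 ∨ j.1 % 3 = 2 := by omega
      rcases h3 with h3 | h3 | h3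
      · exfalso
        apply hv
        rw [← hpvj]
        exact hmem j.1 hJ (by omega)
      · refine ⟨pv (j.1 - 1), hmem _ (by omega) (by omega), ?_⟩
        show ((j.1-1) % d) + 1 = j.1 ∨ j.1 + 1 = (j.1-1) % d
        left
        rw [Nat.mod_eq_of_lt (by omega)]; omega
      · -- j.1 % 3 = 2
        by_cases hdl : j.1 = d - 1
        · exfalso; apply hv; rw [← hpvj]; exact hmem j.1 hJ (by omega)
        · refine ⟨pv (j.1 + 1), hmem _ (by omega) (by omega), ?_⟩
          show ((j.1+1) % d) + 1 = j.1 ∨ j.1 + 1 = (j.1+1) % d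
          right
          rw [Nat.mod_eq_of_lt (by omega)]
    · refine ⟨pv (d-1), Finset.mem_insert_self _ _, ?_⟩
      show ((d-1) % d) + 1 = d
      rw [Nat.mod_eq_of_lt (by omega)]; omega

lemma dom_lower (k l d : ℕ) (hk : 1 ≤ k) (hl : 1 ≤ l) (hd : 2 ≤ d)
    (S : Finset (Fin k ⊕ Fin d ⊕ Fin l))
    (hS : ∀ v ∉ S, ∃ u ∈ S, (Tkld k l d).Adj u v) : (d+4)/3 ≤ S.card := by
  classical
  set a₀ : Fin k := ⟨0, hk⟩
  set b₀ : Fin l := ⟨0, hl⟩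
  set P : Finset (Fin k ⊕ Fin d ⊕ Fin l) := insert (Sum.inl a₀) (insert (Sum.inr (Sum.inr b₀))
      (Finset.image (fun j : Fin d => Sum.inr (Sum.inl j)) Finset.univ)) with hP
  have hPl : ∀ a : Fin k, Sum.inl a ∈ P → a = a₀ := by
    intro a ha; simpa [hP] using ha
  have hPr : ∀ b : Fin l, Sum.inr (Sum.inr b) ∈ P → b = b₀ := by
    intro b hb; simpa [hP] using hb
  have hPcard : P.card = d + 2 := by
    rw [hP, Finset.card_insert_of_notMem (by simp), Finset.card_insert_of_notMem (by simp),
      Finset.card_image_of_injective _ (fun a b h => by injection h with h; injection h with h)]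
    simp
  set N : (Fin k ⊕ Fin d ⊕ Fin l) → Finset (Fin k ⊕ Fin d ⊕ Fin l) :=
    fun s => P.filter (fun p => p = s ∨ (Tkld k l d).Adj s p) with hN
  have hNcard : ∀ s, (N s).card ≤ 3 := by
    rintro (a | j | b)
    · have hsub : N (Sum.inl a) ⊆ {Sum.inl a, Sum.inr (Sum.inl ⟨0, by omega⟩)} := by
        rintro (a' | j' | b') hp <;>
          simp only [hN, Finset.mem_filter] at hp <;>
          obtain ⟨-, hps⟩ := hp
        · rcases hps with h | h
          · simp [h]
          · exact absurd h (by simp [Tkld])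
        · rcases hps with h | h
          · exact absurd h (by simp)
          · have : j'.1 = 0 := h
            simp only [Finset.mem_insert, Finset.mem_singleton]
            right; simp [Fin.ext_iff, this]
        · rcases hps with h | h
          · exact absurd h (by simp)
          · exact absurd h (by simp [Tkld])
      exact (Finset.card_le_card hsub).trans ((Finset.card_insert_le _ _).trans (by simp))
    · set x : Fin k ⊕ Fin d ⊕ Fin l := if j.1 = 0 then Sum.inl a₀
        else Sum.inr (Sum.inl ⟨j.1 - 1, by have := j.isLt; omega⟩) with hx
      set y : Fin k ⊕ Fin d ⊕ Fin l := if h : j.1 + 1 = d then Sum.inr (Sum.inr b₀)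
        else Sum.inr (Sum.inl ⟨j.1 + 1, by have := j.isLt; omega⟩) with hy
      have hsub : N (Sum.inr (Sum.inl j)) ⊆ {Sum.inr (Sum.inl j), x, y} := by
        rintro (a' | j' | b') hp <;>
          simp only [hN, Finset.mem_filter] at hp <;>
          obtain ⟨hpP, hps⟩ := hp
        · rcases hps with h | h
          · exact absurd h (by simp)
          · have h0 : j.1 = 0 := h
            have ha' : a' = a₀ := hPl a' hpP
            subst ha'
            simp only [Finset.mem_insert, Finset.mem_singleton]
            right; left
            rw [hx, if_pos h0]
        · rcases hps with h | h
          · simp [h]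
          · rcases h with h | h
            · -- j.1 + 1 = j'.1, so j' = y
              have hne : ¬ (j.1 + 1 = d) := by have := j'.isLt; omega
              simp only [Finset.mem_insert, Finset.mem_singleton]
              right; right
              rw [hy, dif_neg hne]
              simp [Fin.ext_iff]; omega
            · -- j'.1 + 1 = j.1, so j' = x
              have h0 : ¬ (j.1 = 0) := by omega
              simp only [Finset.mem_insert, Finset.mem_singleton]
              right; left
              rw [hx, if_neg h0]
              simp [Fin.ext_iff]; omega
        · rcases hps with h | h
          · exact absurd h (by simp)
          · have hde : j.1 + 1 = d := h
            have hb' : b' = b₀ := hPr b' hpP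
            subst hb'
            simp only [Finset.mem_insert, Finset.mem_singleton]
            right; right
            rw [hy, dif_pos hde]
      refine (Finset.card_le_card hsub).trans ?_
      refine (Finset.card_insert_le _ _).trans (Nat.succ_le_succ ?_)
      exact (Finset.card_insert_le _ _).trans (by simp)
    · have hsub : N (Sum.inr (Sum.inr b)) ⊆
          {Sum.inr (Sum.inr b), Sum.inr (Sum.inl ⟨d-1, by omega⟩)} := by
        rintro (a' | j' | b') hp <;>
          simp only [hN, Finset.mem_filter] at hp <;>
          obtain ⟨-, hps⟩ := hp
        · rcases hps with h | h
          · exact absurd h (by simp)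
          · exact absurd h (by simp [Tkld])
        · rcases hps with h | h
          · exact absurd h (by simp)
          · have : j'.1 + 1 = d := h
            simp only [Finset.mem_insert, Finset.mem_singleton]
            right; simp [Fin.ext_iff]; omega
        · rcases hps with h | h
          · simp [h]
          · exact absurd h (by simp [Tkld])
      exact (Finset.card_le_card hsub).trans ((Finset.card_insert_le _ _).trans (by simp))
  have hcover : P ⊆ S.biUnion N := by
    intro p hp
    by_cases hpS : p ∈ S
    · exact Finset.mem_biUnion.2 ⟨p, hpS, by simp [hN, hp]⟩
    · obtain ⟨u, hu, hadj⟩ := hS p hpS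
      exact Finset.mem_biUnion.2 ⟨u, hu, by simp [hN, hp, hadj]⟩
  have hle : d + 2 ≤ 3 * S.card := by
    calc d + 2 = P.card := hPcard.symm
    _ ≤ (S.biUnion N).card := Finset.card_le_card hcover
    _ ≤ ∑ s ∈ S, (N s).card := Finset.card_biUnion_le
    _ ≤ S.card * 3 := Finset.sum_le_card_nsmul _ _ 3 (fun s _ => hNcard s)
    _ = 3 * S.card := by ring
  omega

/-- for `n ≥ d + 2` and `d ≥ 2`, the domination number of the tree
`T_d = T(⌈(n−d)/2⌉, ⌊(n−d)/2⌋, d)` of order `n` equals `⌈(d+2)/3⌉`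
(which as a natural number is `(d+4)/3`). -/
theorem dominationNumber_Td (n d : ℕ) (hd : 2 ≤ d) (hn : d + 2 ≤ n) :
    dominationNumber (Tkld ((n - d + 1) / 2) ((n - d) / 2) d) = (d + 2 + 2) / 3 := by
  have hk : 1 ≤ (n - d + 1) / 2 := by omega
  have hl : 1 ≤ (n - d) / 2 := by omega
  obtain ⟨S, hc, hdom⟩ := dom_upper ((n - d + 1) / 2) ((n - d) / 2) d hd
  have he : (d + 2 + 2) / 3 = (d + 4) / 3 := by omega
  rw [he]
  unfold dominationNumber
  apply le_antisymm
  · exact Nat.sInf_le (Set.mem_setOf.2 ⟨S, hc, hdom⟩)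
  · apply le_csInf ⟨S.card, Set.mem_setOf.2 ⟨S, rfl, hdom⟩⟩
    intro b hb
    obtain ⟨S', rfl, hS'⟩ := Set.mem_setOf.1 hb
    exact dom_lower _ _ _ hk hl hd S' hS'
end

section
/- Every connected graph G of order n with domination number γ contains a spanning tree T whose domination number also equals γ. -/
open SimpleGraph


lemma addEdge_isAcyclic {V : Type*} {H : SimpleGraph V} {a b : V}
    (hH : H.IsAcyclic) (hnr : ¬H.Reachable a b) :
    (H ⊔ SimpleGraph.fromEdgeSet {s(a, b)}).IsAcyclic := by
  have hab : a ≠ b := by rintro rfl; exact hnr (Reachable.refl a)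
  have hdel : (H ⊔ SimpleGraph.fromEdgeSet {s(a, b)}) \ SimpleGraph.fromEdgeSet {s(a, b)} = H := by
    ext v w
    simp only [sdiff_adj, sup_adj, fromEdgeSet_adj, Set.mem_singleton_iff]
    constructor
    · rintro ⟨h1 | h2, h3⟩
      · exact h1
      · exact absurd h2 h3
    · intro h
      refine ⟨Or.inl h, ?_⟩
      rintro ⟨he, hne⟩
      rw [Sym2.eq_iff] at he
      rcases he with ⟨rfl, rfl⟩ | ⟨rfl, rfl⟩
      · exact hnr h.reachable
      · exact hnr h.symm.reachable
  have hbridge : (H ⊔ SimpleGraph.fromEdgeSet {s(a, b)}).IsBridge s(a, b) := by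
    rw [SimpleGraph.isBridge_iff]
    show ¬ ((H ⊔ SimpleGraph.fromEdgeSet {s(a, b)}) \ SimpleGraph.fromEdgeSet {s(a, b)}).Reachable a b
    rw [hdel]; exact hnr
  rw [SimpleGraph.isBridge_iff_adj_and_forall_cycle_notMem (by rw [mem_edgeSet, sup_adj]; exact Or.inr ⟨rfl, hab⟩)] at hbridge
  intro v c hc
  have hce := hbridge c hc
  have hsub : ∀ e ∈ c.edges, e ∈ H.edgeSet := by
    intro e he
    have h2 := c.edges_subset_edgeSet he
    rw [SimpleGraph.edgeSet_sup] at h2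
    rcases h2 with h2 | h2
    · exact h2
    · rw [SimpleGraph.edgeSet_fromEdgeSet] at h2
      exfalso
      apply hce
      rwa [Set.mem_singleton_iff.mp h2.1] at he
  exact hH (c.transfer H hsub) (hc.transfer hsub)

theorem auxSpanningTree {V : Type*} [Fintype V]
    (G : SimpleGraph V) (hG : G.Connected) :
    ∃ T : SimpleGraph V, T ≤ G ∧ T.IsTree ∧
      sInf { k : ℕ | ∃ S : Finset V, S.card = k ∧ ∀ v ∉ S, ∃ u ∈ S, T.Adj u v }
        = sInf { k : ℕ | ∃ S : Finset V, S.card = k ∧ ∀ v ∉ S, ∃ u ∈ S, G.Adj u v } := by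
  classical
  -- the dominating-set size set is nonempty for every graph
  have hne : ∀ T : SimpleGraph V,
      { k : ℕ | ∃ S : Finset V, S.card = k ∧ ∀ v ∉ S, ∃ u ∈ S, T.Adj u v }.Nonempty :=
    fun T => ⟨Finset.univ.card, Finset.univ, rfl, fun v hv => absurd (Finset.mem_univ v) hv⟩
  -- a minimum dominating set of G
  obtain ⟨S, hScard, hSdom⟩ := Nat.sInf_mem (hne G)
  -- choose a dominator for each vertex outside S
  have hch : ∀ v : V, ∃ u : V, v ∉ S → u ∈ S ∧ G.Adj u v := by
    intro v
    by_cases hv : v ∈ S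
    · exact ⟨v, fun h => absurd hv h⟩
    · obtain ⟨u, hu, hadj⟩ := hSdom v hv
      exact ⟨u, fun _ => ⟨hu, hadj⟩⟩
  choose f hf using hch
  -- the star forest F
  let F : SimpleGraph V :=
    { Adj := fun a b => (a ∉ S ∧ b = f a) ∨ (b ∉ S ∧ a = f b)
      symm := by constructor; rintro a b (h | h) <;> [exact Or.inr h; exact Or.inl h]
      loopless := by
        constructor; rintro a (⟨ha, hfa⟩ | ⟨ha, hfa⟩) <;> exact ha (hfa ▸ (hf a ha).1) }
  have hFadj : ∀ a b, F.Adj a b ↔ (a ∉ S ∧ b = f a) ∨ (b ∉ S ∧ a = f b) := fun _ _ => Iff.rfl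
  have hFG : F ≤ G := by
    rintro a b (⟨ha, rfl⟩ | ⟨hb, rfl⟩)
    · exact ((hf a ha).2).symm
    · exact (hf b hb).2
  have hFacyclic : F.IsAcyclic := by
    have key : ∀ (w : V), w ∉ S → ∀ (c : F.Walk w w), ¬ c.IsCycle := by
      intro w hwS c hc
      cases c with
      | nil => exact hc.ne_nil rfl
      | @cons _ x _ h p =>
        rw [Walk.cons_isCycle_iff] at hc
        obtain ⟨hp, he⟩ := hc
        have hx : x = f w := by
          rcases h with ⟨-, rfl⟩ | ⟨hxS, hwfx⟩
          · rfl
          · exact absurd (hwfx ▸ (hf x hxS).1) hwS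
        -- look at the last edge of p, via p.reverse
        cases hpr : p.reverse with
        | nil =>
          exact hwS (by rw [hx]; exact (hf w hwS).1)
        | @cons _ y _ h2 q =>
          have hy : y = f w := by
            rcases h2 with ⟨-, rfl⟩ | ⟨hyS, hwfy⟩
            · rfl
            · exact absurd (hwfy ▸ (hf y hyS).1) hwS
          subst hx
          subst hy
          apply he
          have h3 : s(w, f w) ∈ p.reverse.edges := by rw [hpr]; simp
          rwa [Walk.edges_reverse, List.mem_reverse] at h3
      -- done
    intro v c hc
    -- find a vertex outside S on c
    by_cases hvS : v ∈ S
    · cases c with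
      | nil => exact hc.ne_nil rfl
      | @cons _ x _ h p =>
        have hxS : x ∉ S := by
          rcases h with ⟨hvS', -⟩ | ⟨hxS, -⟩
          · exact absurd hvS' (not_not_intro hvS)
          · exact hxS
        have hxsup : x ∈ (Walk.cons h p).support := by
          simp [Walk.support_cons]
        exact key x hxS _ (hc.rotate hxsup)
    · exact key v hvS c hc
  -- maximal acyclic subgraph of G containing F
  let 𝒜 : Set (SimpleGraph V) := {H | F ≤ H ∧ H ≤ G ∧ H.IsAcyclic}
  obtain ⟨H, hH𝒜, hmax⟩ :=
    Set.Finite.exists_maximalFor id 𝒜 (Set.toFinite 𝒜) ⟨F, le_rfl, hFG, hFacyclic⟩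
  obtain ⟨hFH, hHG, hHac⟩ := hH𝒜
  have hreach : ∀ a b, G.Adj a b → H.Reachable a b := by
    intro a b hab
    by_contra hnr
    have hmem : H ⊔ SimpleGraph.fromEdgeSet {s(a, b)} ∈ 𝒜 := by
      refine ⟨hFH.trans le_sup_left, sup_le hHG ?_, addEdge_isAcyclic hHac hnr⟩
      intro x y hxy
      rw [fromEdgeSet_adj, Set.mem_singleton_iff, Sym2.eq_iff] at hxy
      obtain ⟨he, hne⟩ := hxy
      rcases he with ⟨rfl, rfl⟩ | ⟨rfl, rfl⟩
      · exact hab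
      · exact hab.symm
    have heq : id H = id (H ⊔ SimpleGraph.fromEdgeSet {s(a, b)}) :=
      le_antisymm le_sup_left (hmax hmem le_sup_left)
    simp only [id_eq] at heq
    have : H.Adj a b := by
      have h4 : (H ⊔ SimpleGraph.fromEdgeSet {s(a, b)}).Adj a b :=
        Or.inr ⟨rfl, G.ne_of_adj hab⟩
      rwa [← heq] at h4
    exact hnr this.reachable
  have hHconn : H.Connected := by
    rw [connected_iff]
    refine ⟨?_, hG.nonempty⟩
    intro u v
    obtain ⟨w⟩ := hG.preconnected u v
    induction w with
    | nil => exact Reachable.refl _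
    | cons h p ih => exact (hreach _ _ h).trans ih
  refine ⟨H, hHG, ⟨hHconn, hHac⟩, le_antisymm ?_ ?_⟩
  · -- γ(H) ≤ |S| = γ(G)
    rw [← hScard]
    apply Nat.sInf_le
    refine ⟨S, rfl, fun v hv => ⟨f v, (hf v hv).1, hFH (Or.inr ⟨hv, rfl⟩)⟩⟩
  · -- γ(G) ≤ γ(H)
    obtain ⟨S', hS'card, hS'dom⟩ := Nat.sInf_mem (hne H)
    apply Nat.sInf_le
    exact ⟨S', hS'card, fun v hv => (hS'dom v hv).imp fun u ⟨hu, hadj⟩ => ⟨hu, hHG hadj⟩⟩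


/-- every connected graph `G` contains a spanning tree `T` with the same
domination number as `G`. -/
theorem exists_spanningTree_same_dominationNumber {V : Type*} [Fintype V]
    (G : SimpleGraph V) (hG : G.Connected) :
    ∃ T : SimpleGraph V, T ≤ G ∧ T.IsTree ∧ dominationNumber T = dominationNumber G := by
  obtain ⟨T, h1, h2, h3⟩ := auxSpanningTree G hG
  exact ⟨T, h1, h2, h3⟩
end
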